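/- Suppose a continuous ℤ/4-equivariant map Ψ : Γ → S¹ exists, where the ℤ/4 generator acts on Γ ≅ S¹ by rotation u ↦ iu and on the codomain S¹ antipodally (z ↦ −z). Then deg Ψ ≡ 2 (mod 4); in particular deg Ψ ≠ 0. -/

import Mathlib

open Complex

/-- A continuous integer-valued function on `ℝ` is constant. -/
lemma int_valued_continuous_constant {f : ℝ → ℝ} (hf : Continuous f)
    (hint : ∀ t, ∃ m : ℤ, f t = m) : ∀ t, f t = f 0 := by
  intro t
  by_contra hne
  obtain ⟨m, hm⟩ := hint t
  obtain ⟨p, hp⟩ := hint 0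
  have hmp : m ≠ p := by
    intro h; exact hne (by rw [hm, hp, h])
  have h1 : (1:ℝ) ≤ |f t - f 0| := by
    rw [hm, hp, ← Int.cast_sub, ← Int.cast_abs]
    exact_mod_cast Int.one_le_abs (sub_ne_zero.mpr hmp)
  set c : ℝ := min (f t) (f 0) + 1/2 with hc
  have hcmem : c ∈ Set.uIcc (f t) (f 0) := by
    rw [Set.uIcc_eq_union]
    rcases le_total (f t) (f 0) with h | h
    · left
      have habs : |f t - f 0| = f 0 - f t := by
        rw [_root_.abs_sub_comm]
        exact _root_.abs_of_nonneg (by linarith)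
      constructor
      · simp [hc, min_eq_left h]
      · rw [hc, min_eq_left h]; linarith
    · right
      have habs : |f t - f 0| = f t - f 0 := _root_.abs_of_nonneg (by linarith)
      constructor
      · simp [hc, min_eq_right h]
      · rw [hc, min_eq_right h]; linarith
  obtain ⟨s, _, hs⟩ := intermediate_value_uIcc (hf.continuousOn) hcmem
  obtain ⟨q, hq⟩ := hint s
  have hminc : min (f t) (f 0) = ((min m p : ℤ) : ℝ) := by
    rw [hm, hp]; push_cast; ring
  have hqc : (q : ℝ) = ((min m p : ℤ) : ℝ) + 1/2 := by rw [← hq, hs, hc, hminc]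
  have h2 : ((2*q : ℤ) : ℝ) = ((2 * min m p + 1 : ℤ) : ℝ) := by
    push_cast at hqc ⊢; linarith
  have := Int.cast_injective h2
  omega

/-- Suppose a continuous `ℤ/4`-equivariant map `Ψ : Γ → S¹` exists, where the generator
of `ℤ/4` acts on `Γ ≅ S¹` by the rotation `u ↦ i·u` and on the codomain `S¹` antipodally
(`z ↦ -z`). Then `deg Ψ ≡ 2 (mod 4)`; in particular `deg Ψ ≠ 0`. The degree is expressed
through any continuous lift `g` with `Ψ(e^{2πit}) = e^{2πi g(t)}`: the difference
`g 1 - g 0` is an integer congruent to `2` mod `4`, and nonzero. -/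
theorem equivariant_circle_map_degree_two_mod_four
    (Ψ : ℂ → ℂ) (hcont : Continuous Ψ)
    (hsph : ∀ z : ℂ, ‖z‖ = 1 → ‖Ψ z‖ = 1)
    (hequiv : ∀ z : ℂ, ‖z‖ = 1 → Ψ (Complex.I * z) = -(Ψ z))
    (g : ℝ → ℝ) (hg : Continuous g)
    (hlift : ∀ t : ℝ, Ψ (Complex.exp (2 * Real.pi * Complex.I * t)) =
      Complex.exp (2 * Real.pi * Complex.I * (g t))) :
    ∃ n : ℤ, (g 1 - g 0 : ℝ) = n ∧ (n : ZMod 4) = 2 ∧ n ≠ 0 := by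
  have hnorm : ∀ t : ℝ, ‖Complex.exp (2 * Real.pi * Complex.I * t)‖ = 1 := by
    intro t
    rw [Complex.norm_exp]
    simp [Complex.mul_re]
  have hI : Complex.exp (((Real.pi/2 : ℝ) : ℂ) * Complex.I) = Complex.I := by
    rw [Complex.exp_mul_I, ← Complex.ofReal_cos, ← Complex.ofReal_sin]
    simp
  set f : ℝ → ℝ := fun t => g (t + 1/4) - g t - 1/2 with hf
  have hfc : Continuous f := by
    apply Continuous.sub
    apply Continuous.sub
    · exact hg.comp (continuous_id.add continuous_const)
    · exact hg
    · exact continuous_const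
  have hint : ∀ t, ∃ m : ℤ, f t = m := by
    intro t
    have e1 : Complex.exp (2 * (Real.pi:ℂ) * Complex.I * ((t + 1/4 : ℝ) : ℂ)) =
        Complex.I * Complex.exp (2 * (Real.pi:ℂ) * Complex.I * (t : ℂ)) := by
      calc Complex.exp (2 * (Real.pi:ℂ) * Complex.I * ((t + 1/4 : ℝ) : ℂ))
          = Complex.exp (((Real.pi/2 : ℝ) : ℂ) * Complex.I
              + 2 * (Real.pi:ℂ) * Complex.I * (t : ℂ)) := by
            congr 1; push_cast; ring
        _ = Complex.I * Complex.exp (2 * (Real.pi:ℂ) * Complex.I * (t : ℂ)) := by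
            rw [Complex.exp_add, hI]
    have e2 : Complex.exp (2 * (Real.pi:ℂ) * Complex.I * (((g t : ℝ) : ℂ) + 1/2)) =
        -Complex.exp (2 * (Real.pi:ℂ) * Complex.I * ((g t : ℝ) : ℂ)) := by
      rw [show (2 * (Real.pi:ℂ) * Complex.I * (((g t : ℝ) : ℂ) + 1/2)) =
          (Real.pi:ℂ) * Complex.I + 2 * (Real.pi:ℂ) * Complex.I * ((g t : ℝ) : ℂ) by ring,
        Complex.exp_add, Complex.exp_pi_mul_I]
      ring
    have key : Complex.exp (2 * (Real.pi:ℂ) * Complex.I * ((g (t + 1/4) : ℝ) : ℂ)) =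
        Complex.exp (2 * (Real.pi:ℂ) * Complex.I * (((g t : ℝ) : ℂ) + 1/2)) := by
      rw [← hlift (t + 1/4), e1, hequiv _ (hnorm t), hlift t, e2]
    rw [Complex.exp_eq_exp_iff_exists_int] at key
    obtain ⟨n, hn⟩ := key
    refine ⟨n, ?_⟩
    have hpi : (2 * (Real.pi:ℂ) * Complex.I) ≠ 0 := by
      simp [Real.pi_ne_zero, Complex.I_ne_zero]
    have h3 : 2 * (Real.pi:ℂ) * Complex.I * ((g (t + 1/4) : ℝ) : ℂ) =
        2 * (Real.pi:ℂ) * Complex.I * (((g t : ℝ) : ℂ) + 1/2 + (n:ℂ)) := by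
      rw [hn]; ring
    have h2 := mul_left_cancel₀ hpi h3
    have h4 : g (t + 1/4) = g t + 1/2 + (n:ℝ) := by
      apply Complex.ofReal_injective
      push_cast
      rw [h2]
    simp only [hf]
    linarith
  obtain ⟨k, hk⟩ := hint 0
  have hconst := int_valued_continuous_constant hfc hint
  have step : ∀ t : ℝ, g (t + 1/4) - g t = k + 1/2 := by
    intro t
    have h := hconst t
    rw [hk] at h
    simp only [hf] at h
    linarith
  have h14 := step 0
  have h24 := step (1/4)
  have h34 := step (1/2)
  have h44 := step (3/4)
  norm_num at h14 h24 h34 h44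
  refine ⟨4*k + 2, ?_, ?_, by omega⟩
  · push_cast
    linarith
  · push_cast
    rw [show ((4:ZMod 4)) = 0 from rfl]
    ring
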